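/- For all positive integers m and t there exists a constant C = C(m,t) > 0 with the following property: for every positive integer n, every simple graph G on 2n vertices with at least C·(2n)^{2−1/t} edges contains a set S of m vertices such that every subset X ⊆ S with |X| = t has at least m common neighbors in G. -/

import Mathlib

open Finset

lemma DRC.count_tuples {V : Type*} [Fintype V] [DecidableEq V] (t : ℕ) (c : Finset V) :
    (univ.filter (fun u : Fin t → V => ∀ i, u i ∈ c)).card = c.card ^ t := by
  have : univ.filter (fun u : Fin t → V => ∀ i, u i ∈ c)
      = Fintype.piFinset (fun _ : Fin t => c) := by
    ext u; simp [Fintype.mem_piFinset]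
  rw [this, Fintype.card_piFinset]
  simp

lemma DRC.sum_card_A {V : Type*} [Fintype V] [DecidableEq V] (t : ℕ)
    (p : V → V → Prop) [DecidableRel p] :
    ∑ u : Fin t → V, (univ.filter (fun v => ∀ i, p v (u i))).card
      = ∑ v : V, (univ.filter (fun w => p v w)).card ^ t := by
  have h1 : ∀ u : Fin t → V, (univ.filter (fun v => ∀ i, p v (u i))).card
      = ∑ v : V, if (∀ i, p v (u i)) then 1 else 0 := by
    intro u; rw [Finset.card_filter]
  simp_rw [h1]
  rw [Finset.sum_comm]
  refine Finset.sum_congr rfl fun v _ => ?_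
  rw [← DRC.count_tuples t (univ.filter (fun w => p v w))]
  rw [Finset.card_filter]
  refine Finset.sum_congr rfl fun u _ => ?_
  simp

lemma DRC.general {V : Type*} [Fintype V] [DecidableEq V] (m t N : ℕ)
    (hm : 0 < m) (ht : 0 < t) (hN2 : 2 ≤ N) (hcard : Fintype.card V = N)
    (G : SimpleGraph V) [DecidableRel G.Adj]
    (hedge : ((m : ℝ) + (m : ℝ) ^ t) * (N : ℝ) ^ ((2 : ℝ) - 1 / (t : ℝ))
      ≤ (G.edgeFinset.card : ℝ)) :
    ∃ S : Finset V, S.card = m ∧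
      ∀ X : Finset V, X ⊆ S → X.card = t →
        m ≤ (univ.filter (fun v => ∀ x ∈ X, G.Adj v x)).card := by
  classical
  set A : (Fin t → V) → Finset V :=
    fun u => univ.filter (fun v => ∀ i, G.Adj v (u i)) with hA
  set cn : Finset V → Finset V :=
    fun X => univ.filter (fun v => ∀ x ∈ X, G.Adj v x) with hcn
  set bad : Finset (Finset V) :=
    (univ.powersetCard t).filter (fun X => (cn X).card < m) with hbad
  -- Sum 1 : ∑_u |A u| = ∑_v deg(v)^t
  have sum1 : ∑ u : Fin t → V, (A u).card = ∑ v : V, (G.degree v) ^ t := by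
    rw [hA, DRC.sum_card_A t G.Adj]
    refine Finset.sum_congr rfl fun v _ => ?_
    congr 1
    rw [← SimpleGraph.neighborFinset_eq_filter, SimpleGraph.card_neighborFinset_eq_degree]
  -- X ⊆ A u  iff all u i are common neighbors of X
  have hsub : ∀ (X : Finset V) (u : Fin t → V),
      X ⊆ A u ↔ ∀ i, u i ∈ cn X := by
    intro X u
    simp only [hA, hcn, Finset.subset_iff, Finset.mem_filter, Finset.mem_univ, true_and]
    constructor
    · intro h i x hx; exact ((h hx) i).symm
    · intro h x hx i; exact ((h i) x hx).symm
  -- Sum 2 : ∑_u #{bad X ⊆ A u} = ∑_{X bad} |cn X|^t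
  have sum2 : ∑ u : Fin t → V, (bad.filter (fun X => X ⊆ A u)).card
      = ∑ X ∈ bad, (cn X).card ^ t := by
    have h1 : ∀ u : Fin t → V, (bad.filter (fun X => X ⊆ A u)).card
        = ∑ X ∈ bad, if X ⊆ A u then 1 else 0 := fun u => Finset.card_filter _ _
    simp_rw [h1]
    rw [Finset.sum_comm]
    refine Finset.sum_congr rfl fun X _ => ?_
    rw [← DRC.count_tuples t (cn X), Finset.card_filter]
    refine Finset.sum_congr rfl fun u _ => ?_
    simp [hsub X u]
  -- bound on sum2
  have sum2_le : ∑ X ∈ bad, (cn X).card ^ t ≤ N ^ t * (m - 1) ^ t := by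
    calc ∑ X ∈ bad, (cn X).card ^ t ≤ ∑ _X ∈ bad, (m - 1) ^ t := by
          refine Finset.sum_le_sum fun X hX => ?_
          have : (cn X).card < m := (Finset.mem_filter.mp hX).2
          exact Nat.pow_le_pow_left (by omega) t
      _ = bad.card * (m - 1) ^ t := by rw [Finset.sum_const, smul_eq_mul]
      _ ≤ N ^ t * (m - 1) ^ t := by
          refine Nat.mul_le_mul_right _ ?_
          calc bad.card ≤ ((univ : Finset V).powersetCard t).card :=
                Finset.card_le_card (Finset.filter_subset _ _)
            _ = N.choose t := by
                rw [Finset.card_powersetCard, Finset.card_univ, hcard]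
            _ ≤ N ^ t := Nat.choose_le_pow N t
  -- the analytic part : the degree-power sum is large
  have key : (↑(m * N ^ t + N ^ t * (m - 1) ^ t) : ℝ)
      ≤ ((∑ v : V, (G.degree v) ^ t : ℕ) : ℝ) := by
    set e := G.edgeFinset.card with he
    have hdeg2 : ∑ v : V, G.degree v = 2 * e := G.sum_degrees_eq_twice_card_edges
    have hNpos : (0:ℝ) < (N:ℝ) := by exact_mod_cast (by omega : 0 < N)
    have hm1 : (1:ℝ) ≤ (m:ℝ) := by exact_mod_cast hm
    have hmt1 : (1:ℝ) ≤ (m:ℝ) ^ t := one_le_pow₀ hm1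
    have h2e : 2 * ((m:ℝ) + (m:ℝ) ^ t) * (N:ℝ) ^ ((2:ℝ) - 1/(t:ℝ)) ≤ 2 * (e:ℝ) := by
      nlinarith [hedge]
    have ht0 : (t:ℝ) ≠ 0 := Nat.cast_ne_zero.mpr (by omega)
    have hr : ((N:ℝ) ^ ((2:ℝ) - 1/(t:ℝ))) ^ t = (N:ℝ) ^ (2*t-1) := by
      rw [← Real.rpow_natCast ((N:ℝ) ^ ((2:ℝ) - 1/(t:ℝ))) t, ← Real.rpow_mul hNpos.le,
        ← Real.rpow_natCast (N:ℝ) (2*t-1)]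
      congr 1
      push_cast [Nat.cast_sub (by omega : 1 ≤ 2*t)]
      field_simp
    have hpow : (2*((m:ℝ) + (m:ℝ) ^ t)) ^ t * (N:ℝ) ^ (2*t-1) ≤ (2*(e:ℝ)) ^ t := by
      calc (2*((m:ℝ) + (m:ℝ) ^ t)) ^ t * (N:ℝ) ^ (2*t-1)
          = (2*((m:ℝ) + (m:ℝ) ^ t) * ((N:ℝ) ^ ((2:ℝ) - 1/(t:ℝ)))) ^ t := by
            rw [mul_pow (2*((m:ℝ) + (m:ℝ) ^ t)) ((N:ℝ) ^ ((2:ℝ) - 1/(t:ℝ))) t, hr]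
        _ ≤ (2*(e:ℝ)) ^ t := by
            refine pow_le_pow_left₀ ?_ h2e t
            positivity
    have hmean : ((∑ v : V, (G.degree v : ℝ))) ^ t / (N:ℝ) ^ (t-1)
        ≤ ∑ v : V, (G.degree v : ℝ) ^ t := by
      have h := pow_sum_div_card_le_sum_pow (s := (univ : Finset V))
        (f := fun v => (G.degree v : ℝ)) (fun i _ => by positivity) (t-1)
      rw [Nat.sub_add_cancel ht] at h
      simpa [Finset.card_univ, hcard] using h
    have hdegsum : (∑ v : V, (G.degree v : ℝ)) = 2 * (e:ℝ) := by
      rw [← Nat.cast_sum, hdeg2]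
      push_cast; ring
    have hquot : (N:ℝ) ^ (2*t-1) / (N:ℝ) ^ (t-1) = (N:ℝ) ^ t := by
      rw [div_eq_iff (by positivity), ← pow_add]
      congr 1
      omega
    have hbig : (2*((m:ℝ) + (m:ℝ) ^ t)) ^ t * (N:ℝ) ^ t
        ≤ ∑ v : V, (G.degree v : ℝ) ^ t := by
      calc (2*((m:ℝ) + (m:ℝ) ^ t)) ^ t * (N:ℝ) ^ t
          = ((2*((m:ℝ) + (m:ℝ) ^ t)) ^ t * (N:ℝ) ^ (2*t-1)) / (N:ℝ) ^ (t-1) := by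
            rw [mul_div_assoc, hquot]
        _ ≤ (2*(e:ℝ)) ^ t / (N:ℝ) ^ (t-1) := by gcongr
        _ = ((∑ v : V, (G.degree v : ℝ))) ^ t / (N:ℝ) ^ (t-1) := by rw [hdegsum]
        _ ≤ _ := hmean
    have h2C : 2*((m:ℝ) + (m:ℝ) ^ t) ≤ (2*((m:ℝ) + (m:ℝ) ^ t)) ^ t :=
      le_self_pow₀ (by linarith) (by omega)
    have hmm : ((m-1 : ℕ) : ℝ) ^ t ≤ (m:ℝ) ^ t := by
      refine pow_le_pow_left₀ (by positivity) ?_ t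
      exact_mod_cast (by omega : m - 1 ≤ m)
    have hNt0 : (0:ℝ) ≤ (N:ℝ) ^ t := by positivity
    push_cast
    nlinarith [hbig, mul_le_mul_of_nonneg_right h2C hNt0,
      mul_le_mul_of_nonneg_left hmm hNt0]
  -- find a good tuple u
  have main : ∃ u : Fin t → V, m + (bad.filter (fun X => X ⊆ A u)).card ≤ (A u).card := by
    by_contra hcon
    push_neg at hcon
    have hle : ∑ u : Fin t → V, (A u).card
        ≤ ∑ u : Fin t → V, ((bad.filter (fun X => X ⊆ A u)).card + (m - 1)) := by
      refine Finset.sum_le_sum fun u _ => ?_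
      have := hcon u
      omega
    rw [sum1, Finset.sum_add_distrib, sum2, Finset.sum_const, smul_eq_mul] at hle
    have hcard2 : (Finset.univ : Finset (Fin t → V)).card = N ^ t := by
      simp [Fintype.card_fun, hcard]
    rw [hcard2] at hle
    have hkey' : m * N ^ t + N ^ t * (m - 1) ^ t ≤ ∑ v : V, (G.degree v) ^ t := by
      exact_mod_cast key
    have hNt : 0 < N ^ t := Nat.pow_pos (by omega)
    have h2 : m * N ^ t ≤ N ^ t * (m - 1) := by omega
    rw [mul_comm (N ^ t) (m-1)] at h2
    have := Nat.le_of_mul_le_mul_right h2 hNt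
    omega
  obtain ⟨u, hu⟩ := main
  set Bu := bad.filter (fun X => X ⊆ A u) with hBu
  have hv0 : Nonempty V := by
    rw [← Fintype.card_pos_iff, hcard]; omega
  set pick : Finset V → V :=
    fun X => if h : X.Nonempty then h.choose else Classical.arbitrary V with hpick
  set D := Bu.image pick with hD
  set S' := A u \ D with hS'
  have hS'card : m ≤ S'.card := by
    have h1 : D.card ≤ Bu.card := Finset.card_image_le
    have h2 : (A u).card - D.card ≤ S'.card := Finset.le_card_sdiff D (A u)
    omega
  obtain ⟨S, hSsub, hScard⟩ := Finset.exists_subset_card_eq hS'card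
  refine ⟨S, hScard, ?_⟩
  intro X hXS hXt
  have hXS' : X ⊆ S' := hXS.trans hSsub
  have hXA : X ⊆ A u := hXS'.trans (Finset.sdiff_subset)
  have hXnb : X ∉ bad := by
    intro hXbad
    have hXBu : X ∈ Bu := Finset.mem_filter.mpr ⟨hXbad, hXA⟩
    have hXne : X.Nonempty := Finset.card_pos.mp (by omega)
    have hpX : pick X ∈ X := by
      rw [hpick]; simp only [dif_pos hXne]; exact hXne.choose_spec
    have hpD : pick X ∈ D := Finset.mem_image_of_mem pick hXBu
    have hmem : pick X ∈ S' := hXS' hpX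
    rw [hS', Finset.mem_sdiff] at hmem
    exact hmem.2 hpD
  have hXmem : X ∈ (univ : Finset V).powersetCard t :=
    Finset.mem_powersetCard.mpr ⟨Finset.subset_univ X, hXt⟩
  have hcnX : m ≤ (cn X).card := by
    by_contra hlt
    exact hXnb (Finset.mem_filter.mpr ⟨hXmem, by omega⟩)
  exact hcnX

theorem dependent_random_choice (m t : ℕ) (hm : 0 < m) (ht : 0 < t) :
    ∃ C : ℝ, 0 < C ∧
      ∀ n : ℕ, 0 < n → ∀ G : SimpleGraph (Fin (2 * n)),
        C * ((2 * n : ℕ) : ℝ) ^ ((2 : ℝ) - 1 / (t : ℝ)) ≤ (G.edgeSet.ncard : ℝ) →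
        ∃ S : Finset (Fin (2 * n)), S.card = m ∧
          ∀ X : Finset (Fin (2 * n)), X ⊆ S → X.card = t →
            m ≤ {v : Fin (2 * n) | ∀ x ∈ X, G.Adj v x}.ncard := by
  classical
  refine ⟨((m : ℝ) + (m : ℝ) ^ t), by positivity, ?_⟩
  intro n hn G hedge
  have hecast : (G.edgeSet.ncard : ℝ) = (G.edgeFinset.card : ℝ) := by
    rw [← SimpleGraph.coe_edgeFinset, Set.ncard_coe_finset]
  rw [hecast] at hedge
  obtain ⟨S, hScard, hS⟩ := DRC.general m t (2*n) hm ht (by omega)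
    (by simp) G hedge
  refine ⟨S, hScard, fun X hXS hXt => ?_⟩
  have hset : {v : Fin (2*n) | ∀ x ∈ X, G.Adj v x}
      = ↑(univ.filter (fun v => ∀ x ∈ X, G.Adj v x)) := by
    ext v; simp
  rw [hset, Set.ncard_coe_finset]
  have := hS X hXS hXt
  convert this using 2
  ext v
  simp
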